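/- With the Wronskian map (a₀,a₁,b₀,b₁) ↦ (w₀,w₁,w₂,w₃) = (a₁b₀ - a₀b₁, -2a₀, 3b₀ - a₁, 2b₁): a point (w₀,w₁,w₂,w₃) ∈ ℂ⁴ has exactly two preimages if w₂² + 12w₀ - 3w₁w₃ ≠ 0, and exactly one preimage if w₂² + 12w₀ - 3w₁w₃ = 0. Moreover a preimage satisfies a₁ + 3b₀ = 0 precisely in the latter case. -/

import Mathlib

/-- For the Wronskian map `(a₀,a₁,b₀,b₁) ↦ (a₁b₀ - a₀b₁, -2a₀, 3b₀ - a₁, 2b₁)`,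
a point `w` has exactly two preimages if `w₂² + 12w₀ - 3w₁w₃ ≠ 0` and exactly one if
`w₂² + 12w₀ - 3w₁w₃ = 0`; moreover a preimage satisfies `a₁ + 3b₀ = 0` precisely in the
latter case. -/
theorem preimage_count_of_wronskian_operator (w : Fin 4 → ℂ) :
    letI W : (Fin 4 → ℂ) → Fin 4 → ℂ := fun a =>
      ![a 1 * a 2 - a 0 * a 3, -2 * a 0, 3 * a 2 - a 1, 2 * a 3]
    (W ⁻¹' {w}).ncard
        = (if w 2 ^ 2 + 12 * w 0 - 3 * w 1 * w 3 = 0 then 1 else 2) ∧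
      ∀ a : Fin 4 → ℂ, W a = w →
        (a 1 + 3 * a 2 = 0 ↔ w 2 ^ 2 + 12 * w 0 - 3 * w 1 * w 3 = 0) := by
  set W : (Fin 4 → ℂ) → Fin 4 → ℂ := fun a =>
    ![a 1 * a 2 - a 0 * a 3, -2 * a 0, 3 * a 2 - a 1, 2 * a 3] with hW
  obtain ⟨s, hs⟩ : ∃ s : ℂ, s ^ 2 = w 2 ^ 2 + 12 * w 0 - 3 * w 1 * w 3 :=
    IsAlgClosed.exists_pow_nat_eq _ (n := 2) (by norm_num)
  set f : ℂ → (Fin 4 → ℂ) := fun t =>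
    ![-w 1 / 2, (-w 2 + t) / 2, (w 2 + t) / 6, w 3 / 2] with hf
  have key : ∀ a : Fin 4 → ℂ, W a = w ↔ a = f s ∨ a = f (-s) := by
    intro a
    constructor
    · intro h
      have h0 := congrFun h 0
      have h1 := congrFun h 1
      have h2 := congrFun h 2
      have h3 := congrFun h 3
      simp [W] at h0 h1 h2 h3
      have ht : (a 1 + 3 * a 2 - s) * (a 1 + 3 * a 2 + s) = 0 := by
        rw [← h0, ← h1, ← h2, ← h3] at hs
        linear_combination -hs
      rcases mul_eq_zero.mp ht with ht | ht
      · left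
        funext i; fin_cases i <;> simp [f]
        · linear_combination -h1 / 2
        · linear_combination ht / 2 - h2 / 2
        · linear_combination ht / 6 + h2 / 6
        · linear_combination h3 / 2
      · right
        funext i; fin_cases i <;> simp [f]
        · linear_combination -h1 / 2
        · linear_combination ht / 2 - h2 / 2
        · linear_combination ht / 6 + h2 / 6
        · linear_combination h3 / 2
    · rintro (rfl | rfl) <;>
      · funext i; fin_cases i <;> simp [W, f] <;> ring_nf <;> linear_combination hs / 12
  have hpre : W ⁻¹' {w} = {f s, f (-s)} := by
    ext a
    simp only [Set.mem_preimage, Set.mem_singleton_iff, Set.mem_insert_iff,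
      Set.mem_singleton_iff]
    exact key a
  constructor
  · rw [hpre]
    by_cases hD : w 2 ^ 2 + 12 * w 0 - 3 * w 1 * w 3 = 0
    · have hs0 : s = 0 := by
        have : s ^ 2 = 0 := by rw [hs, hD]
        exact pow_eq_zero_iff (by norm_num) |>.mp this
      simp [hs0, hD]
    · have hs0 : s ≠ 0 := by
        intro h; apply hD; rw [← hs, h]; ring
      have hne : f s ≠ f (-s) := by
        intro h
        have := congrFun h 2
        simp [f] at this
        exact hs0 (by linear_combination this / 2)
      rw [if_neg hD, Set.ncard_pair hne]
  · intro a ha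
    have h0 := congrFun ha 0
    have h1 := congrFun ha 1
    have h2 := congrFun ha 2
    have h3 := congrFun ha 3
    simp [W] at h0 h1 h2 h3
    have hD : w 2 ^ 2 + 12 * w 0 - 3 * w 1 * w 3 = (a 1 + 3 * a 2) ^ 2 := by
      rw [← h0, ← h1, ← h2, ← h3]; ring
    rw [hD]
    constructor
    · intro h; rw [h]; ring
    · intro h; exact pow_eq_zero_iff (by norm_num) |>.mp h
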